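/- The N-particle dynamics is equivariant under rigid motions: let G : ℝ → ℝ be a kernel, O a linear isometry of ℝⁿ and b ∈ ℝⁿ. If the differentiable curves q_i, p_i : ℝ → ℝⁿ (i = 1,…,N) solve the N-particle system of the EP equations, then the transformed curves q̃_i(t) := O q_i(t) + b and p̃_i(t) := O p_i(t) also solve the N-particle system. Consequently, matching rigidly transformed templates produces momenta and a Hamiltonian identical (via O) to those of the original matching. -/

import Mathlib

/-- The `N`-particle dynamics is equivariant under rigid motions: if the curves
`(q_i, p_i)` solve the `N`-particle system of the EP equations, then for any linear
isometry `O` of `ℝⁿ` and translation vector `b`, the transformed curves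
`q̃_i(t) = O q_i(t) + b`, `p̃_i(t) = O p_i(t)` also solve the `N`-particle system. -/
theorem nParticleSystem_rigid_equivariant (n N : ℕ) (hn : 1 ≤ n) (hN : 1 ≤ N)
    (G : ℝ → ℝ)
    (O : EuclideanSpace ℝ (Fin n) →ₗᵢ[ℝ] EuclideanSpace ℝ (Fin n))
    (b : EuclideanSpace ℝ (Fin n))
    (q p : Fin N → ℝ → EuclideanSpace ℝ (Fin n))
    (hq : ∀ i t, HasDerivAt (q i) (∑ j : Fin N, G ‖q i t - q j t‖ • p j t) t)
    (hp : ∀ i t, HasDerivAt (p i)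
      (-∑ j ∈ Finset.univ.erase i,
        ((inner ℝ (p i t) (p j t) : ℝ) * deriv G ‖q i t - q j t‖ / ‖q i t - q j t‖) •
          (q i t - q j t)) t) :
    (∀ i t, HasDerivAt (fun s => O (q i s) + b)
      (∑ j : Fin N, G ‖(O (q i t) + b) - (O (q j t) + b)‖ • O (p j t)) t) ∧
    (∀ i t, HasDerivAt (fun s => O (p i s))
      (-∑ j ∈ Finset.univ.erase i,
        ((inner ℝ (O (p i t)) (O (p j t)) : ℝ) *
            deriv G ‖(O (q i t) + b) - (O (q j t) + b)‖ /
            ‖(O (q i t) + b) - (O (q j t) + b)‖) •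
          ((O (q i t) + b) - (O (q j t) + b))) t) := by
  have key : ∀ i j (t : ℝ), (O (q i t) + b) - (O (q j t) + b) = O (q i t - q j t) := by
    intro i j t
    simp [map_sub]
  constructor
  · intro i t
    have h := (O.toContinuousLinearMap.hasFDerivAt.comp_hasDerivAt t (hq i t)).add_const b
    refine h.congr_deriv ?_
    simp only [LinearIsometry.coe_toContinuousLinearMap, map_sum, map_smul, key,
      O.norm_map]
  · intro i t
    have h := O.toContinuousLinearMap.hasFDerivAt.comp_hasDerivAt t (hp i t)
    refine h.congr_deriv ?_
    simp only [LinearIsometry.coe_toContinuousLinearMap, map_neg, map_sum, map_smul, key,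
      LinearIsometry.inner_map_map, ← map_sub, O.norm_map]
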